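/- arXiv:2604.04336 — 4 statements merged into one kernel-verified Lean document; each statement's English description precedes it below -/
import Mathlib

section
/- Let r ≥ 2 be an integer and θ ∈ [0, π/2]. Then cos^r θ + ∑_{ℓ=2}^{r} (1/(r−1))^ℓ (ℓ−1) C(r,ℓ) cos^{r−ℓ}θ sin^ℓ θ ≤ 1. -/
open Real Finset

lemma aux_deriv (m : ℕ) (x y : ℝ) :
    ∑ ℓ ∈ range (m + 2), (ℓ : ℝ) * ((m+1).choose ℓ) * x ^ ℓ * y ^ (m + 1 - ℓ)
      = (m + 1 : ℝ) * x * (x + y) ^ m := by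
  rw [Finset.sum_range_succ']
  have h : ∀ j ∈ range (m+1), ((j+1 : ℕ) : ℝ) * ((m+1).choose (j+1)) * x ^ (j+1) * y ^ (m + 1 - (j+1))
      = (m+1:ℝ) * x * (x ^ j * y ^ (m - j) * (m.choose j : ℝ)) := by
    intro j hj
    have hc : ((j:ℝ)+1) * ((m+1).choose (j+1)) = (m+1 : ℝ) * (m.choose j) := by
      have h1 := Nat.add_one_mul_choose_eq m j
      have h2 := congrArg (Nat.cast (R := ℝ)) h1
      push_cast at h2
      linarith
    have hj' : m + 1 - (j+1) = m - j := by omega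
    rw [hj']
    push_cast
    rw [hc]
    ring
  rw [Finset.sum_congr rfl h]
  simp only [Nat.cast_zero, zero_mul, add_zero]
  rw [← Finset.mul_sum, ← add_pow]

lemma aux_ident (r : ℕ) (hr : 2 ≤ r) (c x : ℝ) :
    ∑ ℓ ∈ Icc 2 r, ((ℓ : ℝ) - 1) * (r.choose ℓ : ℝ) * c ^ (r - ℓ) * x ^ ℓ
      = (r : ℝ) * x * (x + c) ^ (r - 1) - (x + c) ^ r + c ^ r := by
  obtain ⟨m, rfl⟩ : ∃ m, r = m + 2 := ⟨r - 2, by omega⟩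
  have hins : range (m + 2 + 1) = insert 0 (insert 1 (Icc 2 (m+2))) := by
    ext a; simp; omega
  have h1 : ∑ ℓ ∈ range (m + 2 + 1), ((ℓ : ℝ) - 1) * ((m+2).choose ℓ : ℝ) * c ^ (m + 2 - ℓ) * x ^ ℓ
      = (∑ ℓ ∈ Icc 2 (m+2), ((ℓ : ℝ) - 1) * ((m+2).choose ℓ : ℝ) * c ^ (m + 2 - ℓ) * x ^ ℓ) - c ^ (m+2) := by
    rw [hins, Finset.sum_insert (by simp), Finset.sum_insert (by simp)]
    simp
    ring
  have h2 : ∑ ℓ ∈ range (m + 2 + 1), ((ℓ : ℝ) - 1) * ((m+2).choose ℓ : ℝ) * c ^ (m + 2 - ℓ) * x ^ ℓ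
      = (m + 2 : ℝ) * x * (x + c) ^ (m + 1) - (x + c) ^ (m + 2) := by
    have e1 : ∀ ℓ ∈ range (m + 2 + 1), ((ℓ : ℝ) - 1) * ((m+2).choose ℓ : ℝ) * c ^ (m + 2 - ℓ) * x ^ ℓ
        = (ℓ : ℝ) * ((m+2).choose ℓ) * x ^ ℓ * c ^ (m + 2 - ℓ)
          - (x ^ ℓ * c ^ (m + 2 - ℓ) * ((m+2).choose ℓ : ℝ)) := by
      intro ℓ _; ring
    rw [Finset.sum_congr rfl e1, Finset.sum_sub_distrib]
    have := aux_deriv (m+1) x c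
    simp only [show m + 1 + 1 = m + 2 from rfl, show m + 1 + 2 = m + 2 + 1 from rfl] at this
    rw [this, ← add_pow]
    push_cast
    ring_nf
  have h3 : (m + 2 : ℕ) - 1 = m + 1 := by omega
  rw [h3]
  push_cast
  linarith [h1, h2]

lemma aux_key (n : ℕ) (hn : 1 ≤ n) (c s : ℝ) (hc : 0 ≤ c) (hs : 0 ≤ s)
    (hcs : c ^ 2 + s ^ 2 = 1) :
    2 * c ^ (n + 1) + (s - c) * (c + s / n) ^ n ≤ 1 := by
  have hc1 : c ≤ 1 := by nlinarith
  have hs1 : s ≤ 1 := by nlinarith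
  have hn0 : (0:ℝ) < n := by exact_mod_cast hn
  have hu0 : 0 ≤ c + s / n := by positivity
  rcases le_or_gt s c with hcase | hcase
  · -- c ≥ s : use (c+s/n)^n ≥ c^n + c^(n-1) s
    have hcpos : 0 < c := by nlinarith
    obtain ⟨m, rfl⟩ : ∃ m, n = m + 1 := ⟨n - 1, by omega⟩
    have hb : c ^ m * c + c ^ m * s ≤ (c + s / (m+1 : ℕ)) ^ (m+1) := by
      have ha : (0:ℝ) ≤ s / ((m+1 : ℕ) * c) := by positivity
      have h1 : 1 + ((m+1 : ℕ) : ℝ) * (s / ((m+1:ℕ) * c)) ≤ (1 + s / ((m+1:ℕ) * c)) ^ (m+1) :=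
        one_add_mul_le_pow (by linarith) (m+1)
      have h2 : c * (1 + s / ((m+1:ℕ) * c)) = c + s / (m+1:ℕ) := by
        field_simp
      have h3 : (c * (1 + s / ((m+1:ℕ) * c))) ^ (m+1) = c ^ (m+1) * (1 + s / ((m+1:ℕ) * c)) ^ (m+1) :=
        mul_pow _ _ _
      rw [h2] at h3
      rw [h3]
      have h4 : c ^ (m+1) * (1 + ((m+1 : ℕ) : ℝ) * (s / ((m+1:ℕ) * c))) = c ^ m * c + c ^ m * s := by
        have : ((m+1 : ℕ) : ℝ) * (s / ((m+1:ℕ) * c)) = s / c := by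
          field_simp
        rw [this]
        field_simp
        ring
      calc c ^ m * c + c ^ m * s = c ^ (m+1) * (1 + ((m+1 : ℕ) : ℝ) * (s / ((m+1:ℕ) * c))) := h4.symm
        _ ≤ c ^ (m+1) * (1 + s / ((m+1:ℕ) * c)) ^ (m+1) := by
            apply mul_le_mul_of_nonneg_left h1 (by positivity)
    have hcm1 : c ^ m ≤ 1 := pow_le_one₀ hc hc1
    have hpow : c ^ (m + 1 + 1) = c ^ m * c ^ 2 := by ring
    nlinarith [mul_le_mul_of_nonpos_left hb (by linarith : s - c ≤ 0), pow_nonneg hc m]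
  · -- c < s
    rcases le_or_gt (c + s / n) 1 with hu1 | hu1
    · have h1 : (c + s / n) ^ n ≤ (c + s / n) ^ 1 := pow_le_pow_of_le_one hu0 hu1 hn
      have h2 : c + s / n ≤ c + s := by
        have hn1 : (1:ℝ) ≤ n := by exact_mod_cast hn
        have : s / n ≤ s := by
          rw [div_le_iff₀ hn0]; nlinarith
        linarith
      have h3 : c ^ (n + 1) ≤ c ^ 2 := pow_le_pow_of_le_one hc hc1 (by omega)
      have h4 : (s - c) * (c + s / n) ^ n ≤ (s - c) * (c + s) := by
        apply mul_le_mul_of_nonneg_left _ (by linarith)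
        calc (c + s / n) ^ n ≤ (c + s / n) ^ 1 := h1
          _ = c + s / n := pow_one _
          _ ≤ c + s := h2
      nlinarith
    · -- u > 1 forces n ≤ 3
      have hn3 : n ≤ 3 := by
        by_contra hn4
        push_neg at hn4
        have : s / n ≤ 1 / 4 := by
          rw [div_le_div_iff₀ hn0 (by norm_num)]
          have : (4:ℝ) ≤ n := by exact_mod_cast hn4
          nlinarith
        nlinarith
      interval_cases n
      · norm_num; nlinarith [sq_nonneg (s - c), sq_nonneg (c + s - 1)]
      · norm_num; nlinarith [sq_nonneg (s - c), sq_nonneg (c + s - 1), sq_nonneg (c*s), mul_nonneg hc hs, mul_nonneg (mul_nonneg hc hs) hc, mul_nonneg (mul_nonneg hc hs) hs]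
      · norm_num; nlinarith [sq_nonneg (s - c), sq_nonneg (c + s - 1), sq_nonneg (c*s), mul_nonneg hc hs, mul_nonneg (mul_nonneg hc hs) hc, mul_nonneg (mul_nonneg hc hs) hs, sq_nonneg (c*s - 1), mul_nonneg (mul_nonneg hc hc) hs, pow_le_one₀ hc hc1 (n := 2)]

theorem stmt_10 (r : ℕ) (hr : 2 ≤ r) (θ : ℝ) (hθ : θ ∈ Set.Icc 0 (π / 2)) :
    Real.cos θ ^ r
      + ∑ ℓ ∈ Finset.Icc 2 r,
          (1 / ((r : ℝ) - 1)) ^ ℓ * ((ℓ : ℝ) - 1) * (r.choose ℓ : ℝ)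
            * Real.cos θ ^ (r - ℓ) * Real.sin θ ^ ℓ
    ≤ 1 := by
  obtain ⟨hθ0, hθ1⟩ := hθ
  have hπ := Real.pi_pos
  set c := Real.cos θ with hcdef
  set s := Real.sin θ with hsdef
  have hc : 0 ≤ c := Real.cos_nonneg_of_mem_Icc ⟨by linarith, hθ1⟩
  have hs : 0 ≤ s := Real.sin_nonneg_of_nonneg_of_le_pi hθ0 (by linarith)
  have hcs : c ^ 2 + s ^ 2 = 1 := by
    rw [hcdef, hsdef]; rw [add_comm]; exact Real.sin_sq_add_cos_sq θ
  obtain ⟨n, rfl⟩ : ∃ n, r = n + 1 := ⟨r - 1, by omega⟩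
  have hn : 1 ≤ n := by omega
  have hnR : (1:ℝ) ≤ (n:ℝ) := by exact_mod_cast hn
  have hnne : ((n:ℕ):ℝ) ≠ 0 := by positivity
  have hcastr : ((n+1 : ℕ) : ℝ) - 1 = (n : ℝ) := by push_cast; ring
  set x : ℝ := s / (n:ℝ) with hxdef
  have hterm : ∀ ℓ ∈ Finset.Icc 2 (n+1),
      (1 / (((n+1:ℕ) : ℝ) - 1)) ^ ℓ * ((ℓ : ℝ) - 1) * ((n+1).choose ℓ : ℝ)
        * c ^ (n + 1 - ℓ) * s ^ ℓ
      = ((ℓ : ℝ) - 1) * ((n+1).choose ℓ : ℝ) * c ^ (n + 1 - ℓ) * x ^ ℓ := by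
    intro ℓ _
    rw [hcastr, hxdef, div_pow, div_pow, one_pow]
    ring
  rw [Finset.sum_congr rfl hterm, aux_ident (n+1) (by omega) c x]
  have hr1 : n + 1 - 1 = n := by omega
  rw [hr1]
  have hrx : ((n+1 : ℕ) : ℝ) * x = s + x := by
    rw [hxdef]
    field_simp
    push_cast; ring
  have hpow : (x + c) ^ (n + 1) = (x + c) * (x + c) ^ n := by ring
  have hkey := aux_key n hn c s hc hs hcs
  have hxc : c + s / (n:ℝ) = x + c := by rw [hxdef]; ring
  rw [hxc] at hkey
  calc c ^ (n+1) + (((n+1:ℕ) : ℝ) * x * (x + c) ^ n - (x + c) ^ (n+1) + c ^ (n+1))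
      = 2 * c ^ (n+1) + (s - c) * (x + c) ^ n := by rw [hrx, hpow]; ring
    _ ≤ 1 := hkey
end

section
/- (Maclaurin–Cauchy–Schwarz step) Let a_1, …, a_r and b_1, …, b_r be nonnegative reals, 1 ≤ ℓ ≤ r. Then ∑_{I ⊂ {1,…,r}, |I|=ℓ} (∏_{j∉I} a_j)(∏_{k∈I} b_k) ≤ C(r,ℓ) · ((∑_j a_j²)/r)^{(r−ℓ)/2} · ((∑_k b_k²)/r)^{ℓ/2}, where a_j = |u_j| and b_k = |v_k| in the application, i.e. the sum over all ℓ-subsets I of {1,…,r} of the mixed products is bounded by the stated binomial expression. -/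
open Finset

-- reindexing lemma
lemma reindex_pairs {n : ℕ} (k : ℕ) (g : Finset (Fin n) → Fin n → ℝ) :
    ∑ J ∈ powersetCard (k+1) (univ : Finset (Fin n)), ∑ j ∈ J, g (J.erase j) j
    = ∑ K ∈ powersetCard k (univ : Finset (Fin n)), ∑ j ∈ univ \ K, g K j := by
  rw [Finset.sum_sigma', Finset.sum_sigma']
  apply Finset.sum_nbij' (fun p => (⟨p.1.erase p.2, p.2⟩ : Σ _ : Finset (Fin n), Fin n))
    (fun p => ⟨insert p.2 p.1, p.2⟩)
  · rintro ⟨J, j⟩ hp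
    simp only [mem_sigma, mem_powersetCard_univ] at hp ⊢
    obtain ⟨hJ, hj⟩ := hp
    refine ⟨?_, by simp [Finset.mem_erase]⟩
    rw [card_erase_of_mem hj, hJ]
    rfl
  · rintro ⟨K, j⟩ hp
    simp only [mem_sigma, mem_powersetCard_univ, mem_sdiff] at hp ⊢
    obtain ⟨hK, hj⟩ := hp
    refine ⟨?_, mem_insert_self _ _⟩
    rw [card_insert_of_notMem hj.2, hK]
  · rintro ⟨J, j⟩ hp
    simp only [mem_sigma, mem_powersetCard_univ] at hp
    simp [Finset.insert_erase hp.2]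
  · rintro ⟨K, j⟩ hp
    simp only [mem_sigma, mem_powersetCard_univ, mem_sdiff] at hp
    simp [Finset.erase_insert hp.2.2]
  · rintro ⟨J, j⟩ hp
    rfl

-- Chebyshev-type bound
lemma cheb_T {n : ℕ} (x : Fin n → ℝ) (T : Finset (Fin n)) :
    ∑ i ∈ T, (∑ j ∈ T.erase i, x j) * x i
      ≤ ∑ i ∈ T, ((T.erase i).card : ℝ) * x i ^ 2 := by
  have h1 : ∑ i ∈ T, (∑ j ∈ T.erase i, x j) * x i
      = (∑ j ∈ T, x j) * (∑ i ∈ T, x i) - ∑ i ∈ T, x i ^ 2 := by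
    rw [Finset.sum_mul, ← Finset.sum_sub_distrib]
    refine Finset.sum_congr rfl fun i hi => ?_
    rw [Finset.sum_erase_eq_sub hi]
    ring
  have h2 : ∑ i ∈ T, ((T.erase i).card : ℝ) * x i ^ 2
      = (T.card : ℝ) * (∑ i ∈ T, x i ^ 2) - ∑ i ∈ T, x i ^ 2 := by
    rw [Finset.mul_sum, ← Finset.sum_sub_distrib]
    refine Finset.sum_congr rfl fun i hi => ?_
    rw [Finset.card_erase_of_mem hi]
    have : (1:ℕ) ≤ T.card := Finset.card_pos.2 ⟨i, hi⟩
    rw [Nat.cast_sub this]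
    ring
  rw [h1, h2, ← sq]
  have := sq_sum_le_card_mul_sum_sq (s := T) (f := x)
  linarith

noncomputable def esum {n : ℕ} (k : ℕ) (x : Fin n → ℝ) : ℝ :=
  ∑ K ∈ powersetCard k (univ : Finset (Fin n)), ∏ i ∈ K, x i

lemma esum_nonneg {n : ℕ} (k : ℕ) (x : Fin n → ℝ) (hx : ∀ i, 0 ≤ x i) :
    0 ≤ esum k x :=
  Finset.sum_nonneg fun K _ => Finset.prod_nonneg fun i _ => hx i

-- identity (A)
lemma esum_succ {n : ℕ} (k : ℕ) (x : Fin n → ℝ) :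
    ((k:ℝ) + 1) * esum (k+1) x
      = ∑ K ∈ powersetCard k (univ : Finset (Fin n)),
          ∑ j ∈ univ \ K, x j * ∏ i ∈ K, x i := by
  rw [← reindex_pairs k (fun M j => x j * ∏ i ∈ M, x i)]
  unfold esum
  rw [Finset.mul_sum]
  refine Finset.sum_congr rfl fun J hJ => ?_
  rw [mem_powersetCard_univ] at hJ
  have : ∀ j ∈ J, x j * ∏ i ∈ J.erase j, x i = ∏ i ∈ J, x i := fun j hj =>
    Finset.mul_prod_erase J x hj
  rw [Finset.sum_congr rfl this, Finset.sum_const, hJ, nsmul_eq_mul]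
  push_cast
  ring

lemma erase_sdiff_erase {n : ℕ} {K : Finset (Fin n)} {i : Fin n} (hi : i ∈ K) :
    ((univ : Finset (Fin n)) \ K.erase i).erase i = univ \ K := by
  ext j
  simp only [Finset.mem_erase, Finset.mem_sdiff, Finset.mem_univ, true_and]
  constructor
  · rintro ⟨hne, h2⟩ hjK
    exact h2 ⟨hne, hjK⟩
  · intro h
    exact ⟨fun he => h (he ▸ hi), fun h2 => h h2.2⟩

lemma I3 {n : ℕ} (k : ℕ) (hk : k ≤ n) (x : Fin n → ℝ) (hx : ∀ i, 0 ≤ x i) :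
    (k:ℝ) * (∑ K ∈ powersetCard k (univ : Finset (Fin n)),
        ∑ j ∈ univ \ K, x j * ∏ i ∈ K, x i)
    ≤ ((n:ℝ) - k) * (∑ K ∈ powersetCard k (univ : Finset (Fin n)),
        ∑ i ∈ K, x i * ∏ i' ∈ K, x i') := by
  rcases Nat.eq_zero_or_pos k with rfl | hkpos
  · simp
  obtain ⟨m, rfl⟩ : ∃ m, k = m + 1 := ⟨k - 1, (Nat.succ_pred_eq_of_pos hkpos).symm⟩
  -- rewrite LHS
  have hL : (((m:ℝ)+1)) * (∑ K ∈ powersetCard (m+1) (univ : Finset (Fin n)),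
        ∑ j ∈ univ \ K, x j * ∏ i ∈ K, x i)
      = ∑ M ∈ powersetCard m (univ : Finset (Fin n)), ∑ i ∈ univ \ M,
          ∑ j ∈ ((univ : Finset (Fin n)) \ M).erase i, x j * (x i * ∏ i' ∈ M, x i') := by
    rw [← reindex_pairs m (fun M i => ∑ j ∈ ((univ : Finset (Fin n)) \ M).erase i,
          x j * (x i * ∏ i' ∈ M, x i'))]
    rw [Finset.mul_sum]
    refine Finset.sum_congr rfl fun K hK => ?_
    rw [mem_powersetCard_univ] at hK
    -- LHS per K : (m+1) * ∑_{j ∉ K} x j * ∏ K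
    -- RHS per K : ∑_{i∈K} ∑_{j ∈ (univ\K.erase i).erase i} x j * (x i * ∏ erase)
    have hR : ∀ i ∈ K, (∑ j ∈ ((univ : Finset (Fin n)) \ K.erase i).erase i,
          x j * (x i * ∏ i' ∈ K.erase i, x i'))
        = ∑ j ∈ univ \ K, x j * ∏ i' ∈ K, x i' := by
      intro i hi
      rw [erase_sdiff_erase hi]
      refine Finset.sum_congr rfl fun j _ => ?_
      rw [Finset.mul_prod_erase K x hi]
    rw [Finset.sum_congr rfl hR, Finset.sum_const, hK, nsmul_eq_mul]
    push_cast
    ring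
  have hcard : ∀ M ∈ powersetCard m (univ : Finset (Fin n)), ∀ i ∈ univ \ M,
      ((((univ : Finset (Fin n)) \ M).erase i).card : ℝ) = (n:ℝ) - (m+1) := by
    intro M hM i hi
    rw [mem_powersetCard_univ] at hM
    rw [Finset.mem_sdiff] at hi
    rw [Finset.card_erase_of_mem (Finset.mem_sdiff.2 hi),
      Finset.card_sdiff_of_subset (Finset.subset_univ M), Finset.card_univ, Fintype.card_fin, hM]
    have h1 : m + 1 ≤ n := hk
    have h2 : n - m - 1 = n - (m+1) := by omega
    rw [h2, Nat.cast_sub h1]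
    push_cast
    ring
  have hRt : ((n:ℝ) - (m+1)) * (∑ K ∈ powersetCard (m+1) (univ : Finset (Fin n)),
        ∑ i ∈ K, x i * ∏ i' ∈ K, x i')
      = ∑ M ∈ powersetCard m (univ : Finset (Fin n)), ∑ i ∈ univ \ M,
          ((((univ : Finset (Fin n)) \ M).erase i).card : ℝ) * (x i ^ 2 * ∏ i' ∈ M, x i') := by
    rw [← reindex_pairs m (fun M i => ((((univ : Finset (Fin n)) \ M).erase i).card : ℝ)
          * (x i ^ 2 * ∏ i' ∈ M, x i'))]
    rw [Finset.mul_sum]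
    refine Finset.sum_congr rfl fun K hK => ?_
    rw [Finset.mul_sum]
    refine Finset.sum_congr rfl fun i hi => ?_
    rw [mem_powersetCard_univ] at hK
    have hc : ((((univ : Finset (Fin n)) \ K.erase i).erase i).card : ℝ) = (n:ℝ) - (m+1) := by
      rw [erase_sdiff_erase hi, Finset.card_sdiff_of_subset (Finset.subset_univ K),
        Finset.card_univ, Fintype.card_fin, hK]
      have h1 : m + 1 ≤ n := hk
      push_cast [Nat.cast_sub h1]
      ring
    rw [hc]
    have : x i * ∏ i' ∈ K, x i' = x i ^ 2 * ∏ i' ∈ K.erase i, x i' := by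
      rw [← Finset.mul_prod_erase K x hi]; ring
    rw [this]
  push_cast
  rw [hL, hRt]
  refine Finset.sum_le_sum fun M hM => ?_
  have hprod : (0:ℝ) ≤ ∏ i' ∈ M, x i' := Finset.prod_nonneg fun i' _ => hx i'
  have key := cheb_T x ((univ : Finset (Fin n)) \ M)
  calc ∑ i ∈ univ \ M, ∑ j ∈ ((univ : Finset (Fin n)) \ M).erase i,
        x j * (x i * ∏ i' ∈ M, x i')
      = (∑ i ∈ univ \ M, (∑ j ∈ ((univ : Finset (Fin n)) \ M).erase i, x j) * x i)
          * ∏ i' ∈ M, x i' := by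
        rw [Finset.sum_mul]
        refine Finset.sum_congr rfl fun i _ => ?_
        rw [Finset.sum_mul, Finset.sum_mul]
        refine Finset.sum_congr rfl fun j _ => ?_
        ring
    _ ≤ (∑ i ∈ univ \ M, ((((univ : Finset (Fin n)) \ M).erase i).card : ℝ) * x i ^ 2)
          * ∏ i' ∈ M, x i' := mul_le_mul_of_nonneg_right key hprod
    _ = ∑ i ∈ univ \ M, ((((univ : Finset (Fin n)) \ M).erase i).card : ℝ)
          * (x i ^ 2 * ∏ i' ∈ M, x i') := by
        rw [Finset.sum_mul]
        refine Finset.sum_congr rfl fun i _ => ?_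
        ring

lemma key_step {n : ℕ} (k : ℕ) (hk : k + 1 ≤ n) (x : Fin n → ℝ) (hx : ∀ i, 0 ≤ x i) :
    (n:ℝ) * ((k:ℝ) + 1) * esum (k+1) x ≤ ((n:ℝ) - k) * (∑ i, x i) * esum k x := by
  set A := ∑ K ∈ powersetCard k (univ : Finset (Fin n)),
      ∑ j ∈ univ \ K, x j * ∏ i ∈ K, x i with hA
  set B := ∑ K ∈ powersetCard k (univ : Finset (Fin n)),
      ∑ i ∈ K, x i * ∏ i' ∈ K, x i' with hB
  have hI2 : (∑ i, x i) * esum k x = B + A := by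
    unfold esum
    rw [Finset.mul_sum, hA, hB, ← Finset.sum_add_distrib]
    refine Finset.sum_congr rfl fun K _ => ?_
    rw [← Finset.sum_mul, ← Finset.sum_mul,
      ← Finset.sum_sdiff (Finset.subset_univ K)]
    ring
  have hI1 : ((k:ℝ) + 1) * esum (k+1) x = A := esum_succ k x
  have hI3 : (k:ℝ) * A ≤ ((n:ℝ) - k) * B := I3 k (Nat.le_of_succ_le hk) x hx
  have hAnn : 0 ≤ A := by
    rw [hA]
    refine Finset.sum_nonneg fun K _ => Finset.sum_nonneg fun j _ => ?_
    exact mul_nonneg (hx j) (Finset.prod_nonneg fun i _ => hx i)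
  have hnk : (k:ℝ) ≤ (n:ℝ) := by exact_mod_cast Nat.le_of_succ_le hk
  calc (n:ℝ) * ((k:ℝ) + 1) * esum (k+1) x = (n:ℝ) * A := by rw [mul_assoc, hI1]
    _ = (k:ℝ) * A + ((n:ℝ) - k) * A := by ring
    _ ≤ ((n:ℝ) - k) * B + ((n:ℝ) - k) * A := by
        have : ((n:ℝ) - k) * A ≤ ((n:ℝ) - k) * A := le_refl _
        linarith
    _ = ((n:ℝ) - k) * (∑ i, x i) * esum k x := by rw [mul_assoc, hI2]; ring

lemma maclaurin {n : ℕ} (hn : 1 ≤ n) (x : Fin n → ℝ) (hx : ∀ i, 0 ≤ x i) :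
    ∀ k, k ≤ n → esum k x ≤ (n.choose k : ℝ) * ((∑ i, x i) / n) ^ k := by
  intro k
  induction k with
  | zero => intro _; simp [esum, Finset.powersetCard_zero]
  | succ k ih =>
    intro hk1
    have hk : k ≤ n := Nat.le_of_succ_le hk1
    have ihk := ih hk
    have hn0 : (0:ℝ) < (n:ℝ) := by exact_mod_cast hn
    have hpos : (0:ℝ) < (n:ℝ) * ((k:ℝ) + 1) := by positivity
    have hS : 0 ≤ ∑ i, x i := Finset.sum_nonneg fun i _ => hx i
    have hnk : (0:ℝ) ≤ (n:ℝ) - k := by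
      have : (k:ℝ) ≤ (n:ℝ) := by exact_mod_cast hk
      linarith
    refine le_of_mul_le_mul_left ?_ hpos
    calc (n:ℝ) * ((k:ℝ) + 1) * esum (k+1) x
        ≤ ((n:ℝ) - k) * (∑ i, x i) * esum k x := key_step k hk1 x hx
      _ ≤ ((n:ℝ) - k) * (∑ i, x i) * ((n.choose k : ℝ) * ((∑ i, x i) / n) ^ k) := by
          exact mul_le_mul_of_nonneg_left ihk (mul_nonneg hnk hS)
      _ = (n:ℝ) * ((k:ℝ) + 1) * ((n.choose (k+1) : ℝ) * ((∑ i, x i) / n) ^ (k+1)) := by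
          have hc : ((n.choose (k+1) : ℝ)) * ((k:ℝ) + 1) = (n.choose k : ℝ) * ((n:ℝ) - k) := by
            have h := Nat.choose_succ_right_eq n k
            have hcast : ((n.choose (k+1) * (k+1) : ℕ) : ℝ) = ((n.choose k * (n - k) : ℕ) : ℝ) := by
              rw [h]
            push_cast [Nat.cast_sub hk] at hcast
            linarith [hcast]
          have h2 : (n:ℝ) * ((∑ i, x i) / n) = ∑ i, x i := by field_simp
          rw [pow_succ]
          linear_combination (-((∑ i, x i) * ((∑ i, x i) / n) ^ k)) * hc
            - (((k:ℝ)+1) * (n.choose (k+1):ℝ) * ((∑ i, x i) / n) ^ k) * h2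

lemma compl_reindex {n ℓ : ℕ} (hℓ : ℓ ≤ n) (f : Fin n → ℝ) :
    ∑ I ∈ powersetCard ℓ (univ : Finset (Fin n)), ∏ j ∈ univ \ I, f j
    = ∑ J ∈ powersetCard (n - ℓ) (univ : Finset (Fin n)), ∏ j ∈ J, f j := by
  apply Finset.sum_nbij' (fun I => (univ : Finset (Fin n)) \ I)
    (fun J => (univ : Finset (Fin n)) \ J)
  · intro I hI
    rw [mem_powersetCard_univ] at hI ⊢
    rw [Finset.card_sdiff_of_subset (Finset.subset_univ I), Finset.card_univ, Fintype.card_fin, hI]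
  · intro J hJ
    rw [mem_powersetCard_univ] at hJ ⊢
    rw [Finset.card_sdiff_of_subset (Finset.subset_univ J), Finset.card_univ, Fintype.card_fin, hJ]
    omega
  · intro I _; simp
  · intro J _; simp
  · intro I _; rfl

lemma sqrt_pow' (x : ℝ) (hx : 0 ≤ x) (m : ℕ) : Real.sqrt (x ^ m) = Real.sqrt x ^ m := by
  induction m with
  | zero => simp
  | succ m ih => rw [pow_succ, pow_succ, Real.sqrt_mul (pow_nonneg hx m), ih]

theorem stmt_13 (r ℓ : ℕ) (hr : 1 ≤ r) (hℓ : 1 ≤ ℓ) (hℓr : ℓ ≤ r)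
    (a b : Fin r → ℝ) (ha : ∀ j, 0 ≤ a j) (hb : ∀ k, 0 ≤ b k) :
    ∑ I ∈ Finset.powersetCard ℓ (Finset.univ : Finset (Fin r)),
        (∏ j ∈ Finset.univ \ I, a j) * (∏ k ∈ I, b k)
    ≤ (r.choose ℓ : ℝ)
        * Real.sqrt ((∑ j, a j ^ 2) / (r : ℝ)) ^ (r - ℓ)
        * Real.sqrt ((∑ k, b k ^ 2) / (r : ℝ)) ^ ℓ := by
  have hC : (0:ℝ) ≤ (r.choose ℓ : ℝ) := Nat.cast_nonneg _
  set X := Real.sqrt ((∑ j, a j ^ 2) / (r : ℝ)) with hX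
  set Y := Real.sqrt ((∑ k, b k ^ 2) / (r : ℝ)) with hY
  have hcs := Real.sum_mul_le_sqrt_mul_sqrt
    (powersetCard ℓ (univ : Finset (Fin r)))
    (fun I => ∏ j ∈ univ \ I, a j) (fun I => ∏ k ∈ I, b k)
  have hA2 : ∑ I ∈ powersetCard ℓ (univ : Finset (Fin r)), (∏ j ∈ univ \ I, a j) ^ 2
      ≤ (r.choose ℓ : ℝ) * ((∑ j, a j ^ 2) / (r : ℝ)) ^ (r - ℓ) := by
    have h1 : ∑ I ∈ powersetCard ℓ (univ : Finset (Fin r)), (∏ j ∈ univ \ I, a j) ^ 2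
        = ∑ J ∈ powersetCard (r - ℓ) (univ : Finset (Fin r)), ∏ j ∈ J, (a j) ^ 2 := by
      rw [← compl_reindex hℓr (fun j => (a j) ^ 2)]
      exact Finset.sum_congr rfl fun I _ => (Finset.prod_pow _ 2 a).symm
    rw [h1]
    have := maclaurin hr (fun j => (a j) ^ 2) (fun j => sq_nonneg _) (r - ℓ) (Nat.sub_le _ _)
    rwa [esum, Nat.choose_symm hℓr] at this
  have hB2 : ∑ I ∈ powersetCard ℓ (univ : Finset (Fin r)), (∏ k ∈ I, b k) ^ 2
      ≤ (r.choose ℓ : ℝ) * ((∑ k, b k ^ 2) / (r : ℝ)) ^ ℓ := by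
    have h1 : ∑ I ∈ powersetCard ℓ (univ : Finset (Fin r)), (∏ k ∈ I, b k) ^ 2
        = ∑ I ∈ powersetCard ℓ (univ : Finset (Fin r)), ∏ k ∈ I, (b k) ^ 2 :=
      Finset.sum_congr rfl fun I _ => (Finset.prod_pow _ 2 b).symm
    rw [h1]
    exact maclaurin hr (fun k => (b k) ^ 2) (fun k => sq_nonneg _) ℓ hℓr
  have hqa : (0:ℝ) ≤ (∑ j, a j ^ 2) / (r : ℝ) := by positivity
  have hqb : (0:ℝ) ≤ (∑ k, b k ^ 2) / (r : ℝ) := by positivity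
  have hsA : Real.sqrt (∑ I ∈ powersetCard ℓ (univ : Finset (Fin r)),
        (∏ j ∈ univ \ I, a j) ^ 2) ≤ Real.sqrt (r.choose ℓ : ℝ) * X ^ (r - ℓ) := by
    refine (Real.sqrt_le_sqrt hA2).trans_eq ?_
    rw [Real.sqrt_mul hC, sqrt_pow' _ hqa]
  have hsB : Real.sqrt (∑ I ∈ powersetCard ℓ (univ : Finset (Fin r)),
        (∏ k ∈ I, b k) ^ 2) ≤ Real.sqrt (r.choose ℓ : ℝ) * Y ^ ℓ := by
    refine (Real.sqrt_le_sqrt hB2).trans_eq ?_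
    rw [Real.sqrt_mul hC, sqrt_pow' _ hqb]
  calc ∑ I ∈ powersetCard ℓ (univ : Finset (Fin r)),
        (∏ j ∈ univ \ I, a j) * (∏ k ∈ I, b k)
      ≤ Real.sqrt (∑ I ∈ powersetCard ℓ (univ : Finset (Fin r)),
          (∏ j ∈ univ \ I, a j) ^ 2)
        * Real.sqrt (∑ I ∈ powersetCard ℓ (univ : Finset (Fin r)),
          (∏ k ∈ I, b k) ^ 2) := hcs
    _ ≤ (Real.sqrt (r.choose ℓ : ℝ) * X ^ (r - ℓ))
        * (Real.sqrt (r.choose ℓ : ℝ) * Y ^ ℓ) := by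
        apply mul_le_mul hsA hsB (Real.sqrt_nonneg _)
        positivity
    _ = (r.choose ℓ : ℝ) * X ^ (r - ℓ) * Y ^ ℓ := by
        rw [show (Real.sqrt (r.choose ℓ : ℝ) * X ^ (r - ℓ))
            * (Real.sqrt (r.choose ℓ : ℝ) * Y ^ ℓ)
          = (Real.sqrt (r.choose ℓ : ℝ) * Real.sqrt (r.choose ℓ : ℝ))
            * (X ^ (r - ℓ) * Y ^ ℓ) by ring, Real.mul_self_sqrt hC]
        ring
end

section
/- For all integers r ≥ 2 and 1 ≤ j ≤ r, the product ∏_{k=1}^{j} (2r − 2j + 2k − 1)/(r − 1) is at most 3 · 2^{j−1}. -/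
theorem stmt_15 (r j : ℕ) (hr : 2 ≤ r) (hj : 1 ≤ j) (hjr : j ≤ r) :
    ∏ k ∈ Finset.Icc 1 j,
        ((2 * (r : ℝ) - 2 * (j : ℝ) + 2 * (k : ℝ) - 1) / ((r : ℝ) - 1))
      ≤ 3 * 2 ^ (j - 1) := by
  obtain ⟨m, rfl⟩ : ∃ m, j = m + 1 := ⟨j - 1, (Nat.succ_pred_eq_of_pos hj).symm⟩
  have hr' : (2:ℝ) ≤ (r:ℝ) := by exact_mod_cast hr
  have hrpos : (0:ℝ) < (r:ℝ) - 1 := by linarith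
  have hjr' : (m:ℝ) + 1 ≤ (r:ℝ) := by exact_mod_cast hjr
  rw [Finset.prod_Icc_succ_top (Nat.le_add_left 1 m)]
  have h1 : ∏ k ∈ Finset.Icc 1 m,
      ((2 * (r : ℝ) - 2 * ((m + 1 : ℕ) : ℝ) + 2 * (k : ℝ) - 1) / ((r : ℝ) - 1))
      ≤ 2 ^ m := by
    have := Finset.prod_le_prod (s := (Finset.Icc 1 m : Finset ℕ))
      (f := fun (k : ℕ) => (2 * (r : ℝ) - 2 * ((m + 1 : ℕ) : ℝ) + 2 * (k : ℝ) - 1) / ((r : ℝ) - 1))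
      (g := fun _ => (2:ℝ)) ?_ ?_
    · simpa [Nat.card_Icc] using this
    · intro k hk
      obtain ⟨hk1, hk2⟩ := Finset.mem_Icc.mp hk
      have hk1' : (1:ℝ) ≤ (k:ℝ) := by exact_mod_cast hk1
      apply div_nonneg _ hrpos.le
      push_cast
      linarith
    · intro k hk
      obtain ⟨hk1, hk2⟩ := Finset.mem_Icc.mp hk
      have hk2' : (k:ℝ) ≤ (m:ℝ) := by exact_mod_cast hk2
      rw [div_le_iff₀ hrpos]
      push_cast
      linarith
  have h2 : (2 * (r : ℝ) - 2 * ((m + 1 : ℕ) : ℝ) + 2 * (((m + 1 : ℕ)) : ℝ) - 1) / ((r : ℝ) - 1)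
      ≤ 3 := by
    rw [div_le_iff₀ hrpos]
    push_cast
    linarith
  have hpos : (0:ℝ) ≤ (2 * (r : ℝ) - 2 * ((m + 1 : ℕ) : ℝ) + 2 * (((m + 1 : ℕ)) : ℝ) - 1)
      / ((r : ℝ) - 1) := by
    apply div_nonneg _ hrpos.le
    push_cast
    linarith
  have hprodpos : (0:ℝ) ≤ ∏ k ∈ Finset.Icc 1 m,
      ((2 * (r : ℝ) - 2 * ((m + 1 : ℕ) : ℝ) + 2 * (k : ℝ) - 1) / ((r : ℝ) - 1)) := by
    apply Finset.prod_nonneg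
    intro k hk
    obtain ⟨hk1, hk2⟩ := Finset.mem_Icc.mp hk
    have hk1' : (1:ℝ) ≤ (k:ℝ) := by exact_mod_cast hk1
    apply div_nonneg _ hrpos.le
    push_cast
    linarith
  have := mul_le_mul h1 h2 hpos (by positivity)
  simpa [mul_comm] using this
end

section
/- Let f: Ω ⊆ ℝⁿ → ℝ be a C² function and define Θ(f) = (1+|∇f|²)^{-1/2} dx₁∧⋯∧dxₙ + dy ∧ ((1+|∇f|²)^{-1/2} * df) on Ω × ℝ, where * is the Hodge star on ℝⁿ. Then dΘ(f) = 0 if and only if f solves the minimal surface equation div(∇f/√(1+|∇f|²)) = 0. -/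
open Real

/-- `i`-th partial derivative of `f : ℝⁿ → ℝ`. -/
noncomputable def pd {n : ℕ} (f : (Fin n → ℝ) → ℝ) (x : Fin n → ℝ) (i : Fin n) : ℝ :=
  fderiv ℝ f x (Pi.single i 1)

/-- `√(1 + |∇f|²)`. -/
noncomputable def Wf {n : ℕ} (f : (Fin n → ℝ) → ℝ) (x : Fin n → ℝ) : ℝ :=
  Real.sqrt (1 + ∑ i, pd f x i ^ 2)

/-- The value of the `n`-form `Θ(f)` on `ℝ × ℝⁿ` (the first coordinate is `y`) evaluated at the
point `p` on the `n`-tuple of vectors `v`.  In coordinates `(y, x₁, …, xₙ)` it is the determinant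
of the `(n+1)×(n+1)` matrix whose first row is the unit vector `(1, -∇f)/√(1+|∇f|²)` and whose
remaining rows are the vectors `v i`; this coincides with
`(1+|∇f|²)^{-1/2} dx₁∧⋯∧dxₙ + dy ∧ ((1+|∇f|²)^{-1/2} * df)`. -/
noncomputable def ThetaVal {n : ℕ} (f : (Fin n → ℝ) → ℝ)
    (p : ℝ × (Fin n → ℝ)) (v : Fin n → ℝ × (Fin n → ℝ)) : ℝ :=
  Matrix.det (Matrix.of fun i j : Fin (n + 1) =>
    Fin.cases
      (Fin.cases (1 / Wf f p.2) (fun j' => -(pd f p.2 j') / Wf f p.2) j)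
      (fun i' => Fin.cases ((v i').1) (fun j' => (v i').2 j') j) i)

lemma consUpdate {m : ℕ} (r : Fin m → (Fin (m + 1) → ℝ)) (u : Fin (m + 1) → ℝ) :
    Matrix.of (Fin.cons u r) = (Matrix.of (Fin.cons (0 : Fin (m + 1) → ℝ) r)).updateRow 0 u := by
  ext i j
  induction i using Fin.cases with
  | zero => simp
  | succ i' => simp [Matrix.updateRow_ne (Fin.succ_ne_zero i')]

/-- Determinant with fixed rows `r` as a linear function of row `0`. -/
noncomputable def detRow0 {m : ℕ} (r : Fin m → (Fin (m + 1) → ℝ)) :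
    (Fin (m + 1) → ℝ) →ₗ[ℝ] ℝ where
  toFun w := Matrix.det (Matrix.of (Fin.cons w r))
  map_add' w w' := by
    show Matrix.det (Matrix.of (Fin.cons (w + w') r)) = Matrix.det (Matrix.of (Fin.cons w r)) + Matrix.det (Matrix.of (Fin.cons w' r))
    rw [consUpdate r (w + w'), consUpdate r w, consUpdate r w']
    exact Matrix.det_updateRow_add _ 0 w w'
  map_smul' c w := by
    simp only [RingHom.id_apply]
    show Matrix.det (Matrix.of (Fin.cons (c • w) r)) = c • Matrix.det (Matrix.of (Fin.cons w r))
    rw [consUpdate r (c • w), consUpdate r w]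
    simpa using Matrix.det_updateRow_smul _ 0 c w

/-- The unit normal vector `(1, -∇f)/W` as a function of `x`. -/
noncomputable def Nvec {n : ℕ} (f : (Fin n → ℝ) → ℝ) (z : Fin n → ℝ) : Fin (n + 1) → ℝ :=
  Fin.cons (1 / Wf f z) (fun j' => -(pd f z j') / Wf f z)

lemma thetaVal_eq {n : ℕ} (f : (Fin n → ℝ) → ℝ) (q : ℝ × (Fin n → ℝ))
    (v : Fin n → ℝ × (Fin n → ℝ)) :
    ThetaVal f q v = detRow0 (fun i' => Fin.cons (v i').1 (v i').2) (Nvec f q.2) := by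
  show _ = Matrix.det (Matrix.of (Fin.cons (Nvec f q.2) (fun i' => Fin.cons (v i').1 (v i').2)))
  unfold ThetaVal
  congr 1
  ext i j
  induction i using Fin.cases with
  | zero =>
    simp only [Matrix.of_apply, Fin.cases_zero, Fin.cons_zero]
    rfl
  | succ i' =>
    simp only [Matrix.of_apply, Fin.cases_succ, Fin.cons_succ]
    rfl

open Matrix in
/-- Trace identity: `∑ i det(B with row i replaced by A·(row i)) = tr A · det B`. -/
lemma trace_identity {m : ℕ} (A B : Matrix (Fin m) (Fin m) ℝ) :
    ∑ i, (B.updateRow i (A.mulVec (B i))).det = A.trace * B.det := by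
  have h1 : ∀ (i : Fin m) (w : Fin m → ℝ),
      (B.updateRow i w).det = ((Bᵀ.adjugate).mulVec w) i := by
    intro i w
    rw [← cramer_eq_adjugate_mulVec, cramer_apply, updateCol_transpose, det_transpose]
  calc ∑ i, (B.updateRow i (A.mulVec (B i))).det
      = ∑ i, (Bᵀ.adjugate * A * Bᵀ) i i := by
        refine Finset.sum_congr rfl fun i _ => ?_
        rw [h1, mulVec_mulVec]
        simp [Matrix.mulVec, Matrix.mul_apply, dotProduct, Matrix.transpose_apply,
          Finset.mul_sum, Finset.sum_mul, mul_assoc]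
    _ = (Bᵀ.adjugate * A * Bᵀ).trace := by rw [Matrix.trace]; rfl
    _ = (Bᵀ * Bᵀ.adjugate * A).trace := by
        rw [Matrix.trace_mul_cycle]
    _ = A.trace * B.det := by
        rw [mul_adjugate, det_transpose, smul_mul, one_mul, trace_smul, smul_eq_mul, mul_comm]

lemma key {n : ℕ} {Ω : Set (Fin n → ℝ)} (hΩ : IsOpen Ω)
    {f : (Fin n → ℝ) → ℝ} (hf : ContDiffOn ℝ 2 f Ω)
    (p : ℝ × (Fin n → ℝ)) (hp : p.2 ∈ Ω) (v : Fin (n + 1) → ℝ × (Fin n → ℝ)) :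
    ∑ i : Fin (n + 1), (-1 : ℝ) ^ (i : ℕ) *
        fderiv ℝ (fun q => ThetaVal f q (fun j => v (i.succAbove j))) p (v i)
      = -(∑ i, fderiv ℝ (fun z => pd f z i / Wf f z) p.2 (Pi.single i 1)) *
        (Matrix.of fun k : Fin (n + 1) => Fin.cons (v k).1 (v k).2).det := by
  -- differentiability facts
  have hfd : ContDiffOn ℝ 1 (fderiv ℝ f) Ω := hf.fderiv_of_isOpen hΩ (by norm_num)
  have hpd : ∀ j, ContDiffAt ℝ 1 (fun z => pd f z j) p.2 := fun j =>
    ContDiffAt.clm_apply (hfd.contDiffAt (hΩ.mem_nhds hp)) contDiffAt_const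
  have hsum : ContDiffAt ℝ 1 (fun z => 1 + ∑ i, pd f z i ^ 2) p.2 :=
    contDiffAt_const.add (ContDiffAt.sum fun i _ => (hpd i).pow 2)
  have hposval : (0 : ℝ) < 1 + ∑ i, pd f p.2 i ^ 2 := by positivity
  have hW : ContDiffAt ℝ 1 (Wf f) p.2 := by
    unfold Wf; exact hsum.sqrt hposval.ne'
  have hWne : Wf f p.2 ≠ 0 := by
    unfold Wf; positivity
  have hN : DifferentiableAt ℝ (Nvec f) p.2 := by
    refine differentiableAt_pi.2 fun j => ?_
    induction j using Fin.cases with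
    | zero =>
      simp only [Nvec, Fin.cons_zero]
      exact ((contDiffAt_const.div hW hWne).differentiableAt one_ne_zero)
    | succ j' =>
      simp only [Nvec, Fin.cons_succ]
      exact (((hpd j').neg.div hW hWne).differentiableAt one_ne_zero)
  set N' := fderiv ℝ (Nvec f) p.2 with hN'def
  have hNd : HasFDerivAt (Nvec f) N' p.2 := hN.hasFDerivAt
  have hNcompd : ∀ (j : Fin (n + 1)) (u : Fin n → ℝ),
      fderiv ℝ (fun z => Nvec f z j) p.2 u = N' u j := by
    intro j u
    have h : HasFDerivAt (fun z => Nvec f z j)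
        ((ContinuousLinearMap.proj (R := ℝ) (φ := fun _ : Fin (n + 1) => ℝ) j).comp N') p.2 := by
      exact (ContinuousLinearMap.proj (R := ℝ)
        (φ := fun _ : Fin (n + 1) => ℝ) j).hasFDerivAt.comp p.2 hNd
    rw [h.fderiv]; rfl
  set A : Matrix (Fin (n + 1)) (Fin (n + 1)) ℝ :=
    Matrix.of fun k l => Fin.cases (0 : ℝ) (fun l' => N' (Pi.single l' 1) k) l with hAdef
  set B : Matrix (Fin (n + 1)) (Fin (n + 1)) ℝ :=
    Matrix.of fun k => Fin.cons (v k).1 (v k).2 with hBdef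
  have hAB : ∀ i, A.mulVec (B i) = N' ((v i).2) := by
    intro i
    funext k
    have hv2 : (v i).2 = ∑ l', (v i).2 l' • (Pi.single l' 1 : Fin n → ℝ) := by
      simp_rw [← Pi.single_smul, smul_eq_mul, mul_one, Finset.univ_sum_single]
    calc A.mulVec (B i) k = ∑ l, A k l * B i l := rfl
      _ = ∑ l', (v i).2 l' * N' (Pi.single l' 1) k := by
          rw [Fin.sum_univ_succ]
          simp [hAdef, hBdef, mul_comm]
      _ = N' ((v i).2) k := by
          conv_rhs => rw [hv2]
          rw [map_sum]
          simp [mul_comm]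
  have hsign : ∀ (i : Fin (n + 1)) (w : Fin (n + 1) → ℝ),
      Matrix.det (Matrix.of (Fin.cons w
          (fun j => Fin.cons (v (i.succAbove j)).1 (v (i.succAbove j)).2)))
        = (-1 : ℝ) ^ (i : ℕ) * (B.updateRow i w).det := by
    intro i w
    have hM : Matrix.of (Fin.cons w
          (fun j => Fin.cons (v (i.succAbove j)).1 (v (i.succAbove j)).2))
        = (B.updateRow i w).submatrix (⇑(i.cycleRange.symm)) id := by
      ext k l
      induction k using Fin.cases with
      | zero => simp [Fin.cycleRange_symm_zero]
      | succ k' =>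
        simp [Fin.cycleRange_symm_succ, Matrix.updateRow_ne (Fin.succAbove_ne i k'), hBdef]
    rw [hM, show ((B.updateRow i w).submatrix (⇑(i.cycleRange.symm)) id)
        = ((B.updateRow i w).submatrix (⇑(i.cycleRange.symm : Equiv.Perm (Fin (n+1)))) id) from rfl,
      Matrix.det_permute]
    rw [Equiv.Perm.sign_symm, Fin.sign_cycleRange]
    push_cast
    ring
  have hterm : ∀ i : Fin (n + 1),
      fderiv ℝ (fun q => ThetaVal f q (fun j => v (i.succAbove j))) p (v i)
        = (-1 : ℝ) ^ (i : ℕ) * (B.updateRow i (A.mulVec (B i))).det := by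
    intro i
    set r : Fin n → (Fin (n + 1) → ℝ) :=
      fun j => Fin.cons (v (i.succAbove j)).1 (v (i.succAbove j)).2 with hrdef
    have heq : (fun q : ℝ × (Fin n → ℝ) => ThetaVal f q (fun j => v (i.succAbove j)))
        = fun q => detRow0 r (Nvec f q.2) := by
      funext q; rw [thetaVal_eq]
    have hD : HasFDerivAt (fun q : ℝ × (Fin n → ℝ) => detRow0 r (Nvec f q.2))
        (((detRow0 r).toContinuousLinearMap).comp
          (N'.comp (ContinuousLinearMap.snd ℝ ℝ (Fin n → ℝ)))) p :=
      ((detRow0 r).toContinuousLinearMap.hasFDerivAt).comp p (hNd.comp p hasFDerivAt_snd)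
    rw [heq, hD.fderiv]
    rw [hAB i]
    show detRow0 r (N' ((v i).2)) = _
    rw [← hAB i]
    show Matrix.det (Matrix.of (Fin.cons (A.mulVec (B i)) r)) = _
    exact hsign i (A.mulVec (B i))
  have htr : A.trace = -(∑ i, fderiv ℝ (fun z => pd f z i / Wf f z) p.2 (Pi.single i 1)) := by
    have hdiag : ∀ j : Fin n, A j.succ j.succ
        = -(fderiv ℝ (fun z => pd f z j / Wf f z) p.2 (Pi.single j 1)) := by
      intro j
      have h1 : A j.succ j.succ = N' (Pi.single j 1) j.succ := by simp [hAdef]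
      rw [h1, ← hNcompd j.succ]
      have h2 : (fun z => Nvec f z j.succ) = fun z => -(pd f z j / Wf f z) := by
        funext z; simp [Nvec, neg_div]
      rw [h2, fderiv_fun_neg]
      simp
    rw [Matrix.trace]
    rw [show ∑ k, (A.diag) k = ∑ k, A k k from rfl, Fin.sum_univ_succ]
    have h0 : A 0 0 = 0 := by simp [hAdef]
    rw [h0, zero_add, Finset.sum_congr rfl fun j _ => hdiag j]
    simp
  calc ∑ i : Fin (n + 1), (-1 : ℝ) ^ (i : ℕ) *
        fderiv ℝ (fun q => ThetaVal f q (fun j => v (i.succAbove j))) p (v i)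
      = ∑ i : Fin (n + 1), (B.updateRow i (A.mulVec (B i))).det := by
        refine Finset.sum_congr rfl fun i _ => ?_
        rw [hterm i, ← mul_assoc, ← mul_pow]
        norm_num
    _ = A.trace * B.det := trace_identity A B
    _ = _ := by rw [htr]


/-- Codimension-one case: `dΘ(f) = 0` on `Ω × ℝ` if and only if `f` solves the minimal surface
equation `div(∇f/√(1+|∇f|²)) = 0` on `Ω`.  The exterior derivative is expressed through the
standard formula `dΘ(p)(v₀,…,vₙ) = ∑ᵢ (−1)ⁱ (D_{vᵢ}Θ)(p)(v₀,…,v̂ᵢ,…,vₙ)`. -/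
theorem stmt_19 (n : ℕ) (Ω : Set (Fin n → ℝ)) (hΩ : IsOpen Ω)
    (f : (Fin n → ℝ) → ℝ) (hf : ContDiffOn ℝ 2 f Ω) :
    (∀ p : ℝ × (Fin n → ℝ), p.2 ∈ Ω →
        ∀ v : Fin (n + 1) → ℝ × (Fin n → ℝ),
          ∑ i : Fin (n + 1), (-1 : ℝ) ^ (i : ℕ) *
            fderiv ℝ (fun q => ThetaVal f q (fun j => v (i.succAbove j))) p (v i) = 0)
    ↔ (∀ x ∈ Ω, ∑ i, fderiv ℝ (fun z => pd f z i / Wf f z) x (Pi.single i 1) = 0) := by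
  constructor
  · intro H x hx
    set v : Fin (n + 1) → ℝ × (Fin n → ℝ) := fun k =>
      ((1 : Matrix (Fin (n + 1)) (Fin (n + 1)) ℝ) k 0,
        fun j' => (1 : Matrix (Fin (n + 1)) (Fin (n + 1)) ℝ) k j'.succ) with hvdef
    have h := key hΩ hf (0, x) hx v
    rw [H (0, x) hx v] at h
    have hB : (Matrix.of fun k : Fin (n + 1) => Fin.cons (v k).1 (v k).2)
        = (1 : Matrix (Fin (n + 1)) (Fin (n + 1)) ℝ) := by
      ext k l
      induction l using Fin.cases with
      | zero => simp [hvdef]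
      | succ l' => simp [hvdef]
    rw [hB, Matrix.det_one, mul_one] at h
    have := h.symm
    simpa using this
  · intro H p hp v
    rw [key hΩ hf p hp v, H p.2 hp, neg_zero, zero_mul]
end
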